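/- (Gaussian kernel computation) For s, τ > 0 and ρ > 0, the integral K(τ,z;s,y;x) = (16π²ρ²τs)^{−2} ∫_{ℝ⁴} exp{ i|z−w|²/(4τ) − |x−w|²/ρ² + i|w−y|²/(4s) } dw satisfies sup_{x,y,z ∈ ℝ⁴} |K(τ,z;s,y;x)| ∼ [16 s²τ² + ρ⁴(s+τ)²]^{−1}. -/

import Mathlib

open MeasureTheory

/-- The Gaussian kernel
`K(τ,z;s,y;x) = (16π²ρ²τs)^{-2} ∫ exp{ i|z-w|²/(4τ) - |x-w|²/ρ² + i|w-y|²/(4s) } dw`. -/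
noncomputable def gaussKernel (τ s ρ : ℝ) (x y z : EuclideanSpace ℝ (Fin 4)) : ℂ :=
  (((16 * Real.pi ^ 2 * ρ ^ 2 * τ * s : ℝ) : ℂ) ^ 2)⁻¹ *
    ∫ w : EuclideanSpace ℝ (Fin 4),
      Complex.exp (Complex.I * ((‖z - w‖ ^ 2 / (4 * τ) : ℝ) : ℂ)
        - ((‖x - w‖ ^ 2 / ρ ^ 2 : ℝ) : ℂ)
        + Complex.I * ((‖w - y‖ ^ 2 / (4 * s) : ℝ) : ℂ))

namespace GaussAux

open Complex

noncomputable def gA (τ s ρ : ℝ) : ℂ := I / (4*τ) + I / (4*s) - 1/(ρ:ℂ)^2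
noncomputable def gB (τ s ρ xi yi zi : ℝ) : ℂ :=
  2*xi/(ρ:ℂ)^2 - I*zi/(2*τ) - I*yi/(2*s)
noncomputable def gD (τ s ρ xi yi zi : ℝ) : ℂ :=
  I*(zi:ℂ)^2/(4*τ) - (xi:ℂ)^2/(ρ:ℂ)^2 + I*(yi:ℂ)^2/(4*s)

lemma gA_eq (τ s ρ : ℝ) : gA τ s ρ = ((-(1/ρ^2) : ℝ) : ℂ) + ((1/(4*τ)+1/(4*s) : ℝ) : ℂ)*I := by
  unfold gA; push_cast; ring

lemma gB_eq (τ s ρ xi yi zi : ℝ) :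
    gB τ s ρ xi yi zi = ((2*xi/ρ^2 : ℝ) : ℂ) + ((-(zi/(2*τ)+yi/(2*s)) : ℝ) : ℂ)*I := by
  unfold gB; push_cast; ring

lemma gD_eq (τ s ρ xi yi zi : ℝ) :
    gD τ s ρ xi yi zi = ((-(xi^2/ρ^2) : ℝ) : ℂ) + ((zi^2/(4*τ)+yi^2/(4*s) : ℝ) : ℂ)*I := by
  unfold gD; push_cast; ring

lemma gA_re (τ s ρ : ℝ) : (gA τ s ρ).re = -(1/ρ^2) := by
  rw [gA_eq]
  simp only [Complex.add_re, Complex.ofReal_re, Complex.mul_re, Complex.I_re,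
    Complex.ofReal_im, Complex.I_im]
  ring

lemma gA_im (τ s ρ : ℝ) : (gA τ s ρ).im = 1/(4*τ)+1/(4*s) := by
  rw [gA_eq]
  simp only [Complex.add_im, Complex.ofReal_im, Complex.mul_im, Complex.I_im,
    Complex.ofReal_re, Complex.I_re]
  ring

lemma gA_re_neg (τ s ρ : ℝ) (hρ : 0 < ρ) : (gA τ s ρ).re < 0 := by
  rw [gA_re]
  have : (0:ℝ) < 1/ρ^2 := by positivity
  linarith

lemma gA_ne (τ s ρ : ℝ) (hρ : 0 < ρ) : gA τ s ρ ≠ 0 := by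
  intro h
  have := gA_re_neg τ s ρ hρ
  rw [h] at this
  simp at this

lemma term_id (τ s ρ v xi yi zi : ℂ) :
    I * (zi - v)^2/(4*τ) - (xi - v)^2/ρ^2 + I*(v - yi)^2/(4*s)
    = (I/(4*τ)+I/(4*s)-1/ρ^2) * v^2 + (2*xi/ρ^2 - I*zi/(2*τ) - I*yi/(2*s)) * v
      + (I*zi^2/(4*τ) - xi^2/ρ^2 + I*yi^2/(4*s)) := by
  simp only [div_eq_mul_inv, mul_inv]
  ring_nf

lemma hnorm (u : EuclideanSpace ℝ (Fin 4)) : (‖u‖^2 : ℝ) = ∑ i, (u i)^2 := by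
  rw [EuclideanSpace.norm_eq, Real.sq_sqrt (by positivity)]
  simp [Real.norm_eq_abs, sq_abs]

lemma integral_eq (τ s ρ : ℝ) (hτ : 0 < τ) (hs : 0 < s) (hρ : 0 < ρ)
    (x y z : EuclideanSpace ℝ (Fin 4)) :
    (∫ w : EuclideanSpace ℝ (Fin 4),
      Complex.exp (Complex.I * ((‖z - w‖ ^ 2 / (4 * τ) : ℝ) : ℂ)
        - ((‖x - w‖ ^ 2 / ρ ^ 2 : ℝ) : ℂ)
        + Complex.I * ((‖w - y‖ ^ 2 / (4 * s) : ℝ) : ℂ))) =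
    ∏ i : Fin 4, (((Real.pi : ℂ) / -(gA τ s ρ)) ^ (1/2 : ℂ) *
      Complex.exp (gD τ s ρ (x i) (y i) (z i)
        - (gB τ s ρ (x i) (y i) (z i))^2 / (4 * gA τ s ρ))) := by
  have hA : (gA τ s ρ).re < 0 := gA_re_neg τ s ρ hρ
  have hmp := (EuclideanSpace.volume_preserving_symm_measurableEquiv_toLp (Fin 4)).symm
  rw [← hmp.integral_comp (MeasurableEquiv.measurableEmbedding _)]
  have key : ∀ v : Fin 4 → ℝ,
      Complex.exp (Complex.I * ((‖z - (MeasurableEquiv.toLp 2 (Fin 4 → ℝ)).symm.symm v‖ ^ 2 / (4 * τ) : ℝ) : ℂ)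
        - ((‖x - (MeasurableEquiv.toLp 2 (Fin 4 → ℝ)).symm.symm v‖ ^ 2 / ρ ^ 2 : ℝ) : ℂ)
        + Complex.I * ((‖(MeasurableEquiv.toLp 2 (Fin 4 → ℝ)).symm.symm v - y‖ ^ 2 / (4 * s) : ℝ) : ℂ)) =
      ∏ i : Fin 4, Complex.exp (gA τ s ρ * (v i : ℂ)^2
          + gB τ s ρ (x i) (y i) (z i) * (v i) + gD τ s ρ (x i) (y i) (z i)) := by
    intro v
    rw [← Complex.exp_sum]
    congr 1
    have happ : ∀ (u : EuclideanSpace ℝ (Fin 4)) (i : Fin 4),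
        (u - (MeasurableEquiv.toLp 2 (Fin 4 → ℝ)).symm.symm v) i = u i - v i := by
      intro u i; simp [MeasurableEquiv.toLp]; rfl
    have happ' : ∀ (u : EuclideanSpace ℝ (Fin 4)) (i : Fin 4),
        ((MeasurableEquiv.toLp 2 (Fin 4 → ℝ)).symm.symm v - u) i = v i - u i := by
      intro u i; simp [MeasurableEquiv.toLp]; rfl
    rw [hnorm, hnorm, hnorm]
    simp only [happ, happ']
    push_cast
    rw [Finset.sum_div, Finset.sum_div, Finset.sum_div, Finset.mul_sum, Finset.mul_sum,
      ← Finset.sum_sub_distrib, ← Finset.sum_add_distrib]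
    refine Finset.sum_congr rfl fun i _ => ?_
    simp only [gA, gB, gD]
    simpa [mul_div_assoc] using term_id (τ:ℂ) (s:ℂ) (ρ:ℂ) (v i) (x i) (y i) (z i)
  simp only [Function.comp_def, key]
  rw [volume_pi, integral_fintype_prod_eq_prod (ι := Fin 4) (E := fun _ => ℝ)
    (f := fun i t => Complex.exp (gA τ s ρ * (t : ℂ)^2
          + gB τ s ρ (x i) (y i) (z i) * t + gD τ s ρ (x i) (y i) (z i)))]
  exact Finset.prod_congr rfl fun i _ => integral_cexp_quadratic hA _ _

lemma sq_eq (br bi : ℝ) :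
    (((br:ℝ):ℂ) + ((bi:ℝ):ℂ)*I)^2 = ((br^2-bi^2 : ℝ) : ℂ) + ((2*br*bi : ℝ):ℂ)*I := by
  push_cast; ring_nf; rw [Complex.I_sq]; ring

lemma re_div_calc (ar ai br bi dr di : ℝ) :
    ((((dr:ℝ):ℂ) + ((di:ℝ):ℂ)*I) - (((br:ℝ):ℂ) + ((bi:ℝ):ℂ)*I)^2/(4*(((ar:ℝ):ℂ) + ((ai:ℝ):ℂ)*I))).re
    = dr - ((br^2-bi^2)*(4*ar) + (2*br*bi)*(4*ai))/((4*ar)^2+(4*ai)^2) := by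
  rw [sq_eq]
  have h4 : (4:ℂ)*(((ar:ℝ):ℂ) + ((ai:ℝ):ℂ)*I) = ((4*ar : ℝ):ℂ) + ((4*ai : ℝ):ℂ)*I := by
    push_cast; ring
  rw [h4]
  simp [Complex.div_re, Complex.normSq_apply, ← Complex.ofReal_pow]
  ring

lemma re_eq (τ s ρ xi yi zi : ℝ) (hτ : 0 < τ) (hs : 0 < s) (hρ : 0 < ρ) :
    (gD τ s ρ xi yi zi - (gB τ s ρ xi yi zi)^2/(4 * gA τ s ρ)).re
    = -(1/ρ^2) * (xi*(1/(4*τ)+1/(4*s)) - (zi/(4*τ)+yi/(4*s)))^2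
        / ((1/ρ^2)^2 + (1/(4*τ)+1/(4*s))^2) := by
  rw [gA_eq, gB_eq, gD_eq, re_div_calc]
  have h1 : (1/ρ^2)^2 + (1/(4*τ)+1/(4*s))^2 ≠ 0 := by positivity
  have h2 : (4*(-(1/ρ^2)))^2+(4*(1/(4*τ)+1/(4*s)))^2 ≠ 0 := by positivity
  field_simp
  ring

lemma re_le (τ s ρ xi yi zi : ℝ) (hτ : 0 < τ) (hs : 0 < s) (hρ : 0 < ρ) :
    (gD τ s ρ xi yi zi - (gB τ s ρ xi yi zi)^2/(4 * gA τ s ρ)).re ≤ 0 := by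
  rw [re_eq τ s ρ xi yi zi hτ hs hρ]
  have h1 : (0:ℝ) < (1/ρ^2)^2 + (1/(4*τ)+1/(4*s))^2 := by positivity
  rw [neg_mul, neg_div]
  simp only [neg_nonpos]
  positivity

/-- The supremal value. -/
noncomputable def M (τ s ρ : ℝ) : ℝ :=
  (16 * Real.pi^2)⁻¹ * (16 * s ^ 2 * τ ^ 2 + ρ ^ 4 * (s + τ) ^ 2)⁻¹

lemma abs_cpow_half (w : ℂ) (hw : w ≠ 0) :
    ‖w ^ (1/2 : ℂ)‖ = ‖w‖ ^ (1/2 : ℝ) := by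
  rw [Complex.norm_cpow_of_ne_zero hw]
  norm_num

lemma abs_K (τ s ρ : ℝ) (hτ : 0 < τ) (hs : 0 < s) (hρ : 0 < ρ)
    (x y z : EuclideanSpace ℝ (Fin 4)) :
    ‖gaussKernel τ s ρ x y z‖
    = ((16 * Real.pi ^ 2 * ρ ^ 2 * τ * s)^2)⁻¹
        * (Real.pi / ‖gA τ s ρ‖)^2
        * Real.exp (∑ i : Fin 4,
            (gD τ s ρ (x i) (y i) (z i) - (gB τ s ρ (x i) (y i) (z i))^2/(4 * gA τ s ρ)).re) := by
  have hπ := Real.pi_pos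
  have hAne := gA_ne τ s ρ hρ
  have hbase : ((Real.pi : ℂ) / -(gA τ s ρ)) ≠ 0 := by
    apply div_ne_zero
    · exact_mod_cast hπ.ne'
    · simpa using hAne
  unfold gaussKernel
  rw [integral_eq τ s ρ hτ hs hρ x y z, norm_mul, norm_inv, norm_pow, norm_prod]
  have habsbase : ‖(Real.pi : ℂ) / -(gA τ s ρ)‖ = Real.pi / ‖gA τ s ρ‖ := by
    rw [norm_div, norm_neg, Complex.norm_real, Real.norm_eq_abs, abs_of_pos hπ]
  have h1 : ∀ i : Fin 4,
      ‖((Real.pi : ℂ) / -(gA τ s ρ)) ^ (1/2 : ℂ) *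
        Complex.exp (gD τ s ρ (x i) (y i) (z i)
          - (gB τ s ρ (x i) (y i) (z i))^2 / (4 * gA τ s ρ))‖
      = (Real.pi / ‖gA τ s ρ‖) ^ (1/2 : ℝ) *
          Real.exp ((gD τ s ρ (x i) (y i) (z i)
            - (gB τ s ρ (x i) (y i) (z i))^2/(4 * gA τ s ρ)).re) := by
    intro i
    rw [norm_mul, abs_cpow_half _ hbase, Complex.norm_exp, habsbase]
  simp only [h1]
  rw [Finset.prod_mul_distrib, Finset.prod_const, ← Real.exp_sum]
  have hb : (0:ℝ) ≤ Real.pi / ‖gA τ s ρ‖ := by positivity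
  have h2 : ((Real.pi / ‖gA τ s ρ‖) ^ (1/2 : ℝ)) ^ (Finset.univ : Finset (Fin 4)).card
      = (Real.pi / ‖gA τ s ρ‖)^2 := by
    rw [show (Finset.univ : Finset (Fin 4)).card = 4 by rfl]
    rw [← Real.rpow_natCast (_ ^ (1/2:ℝ)) 4, ← Real.rpow_mul hb]
    norm_num
  rw [h2, Complex.norm_real, Real.norm_eq_abs]
  have : |16 * Real.pi ^ 2 * ρ ^ 2 * τ * s| = 16 * Real.pi ^ 2 * ρ ^ 2 * τ * s := by
    apply abs_of_pos; positivity
  rw [this]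
  ring

lemma normSq_gA (τ s ρ : ℝ) :
    ‖gA τ s ρ‖^2 = (1/ρ^2)^2 + (1/(4*τ)+1/(4*s))^2 := by
  rw [Complex.sq_norm, Complex.normSq_apply, gA_re, gA_im]
  ring

lemma prefactor_eq (τ s ρ : ℝ) (hτ : 0 < τ) (hs : 0 < s) (hρ : 0 < ρ) :
    ((16 * Real.pi ^ 2 * ρ ^ 2 * τ * s)^2)⁻¹ * (Real.pi / ‖gA τ s ρ‖)^2
      = M τ s ρ := by
  have hπ := Real.pi_pos
  have hA2 := normSq_gA τ s ρ
  rw [div_pow, hA2, M]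
  have hB : (0:ℝ) < 16 * s ^ 2 * τ ^ 2 + ρ ^ 4 * (s + τ) ^ 2 := by positivity
  have hd : (0:ℝ) < (1/ρ^2)^2 + (1/(4*τ)+1/(4*s))^2 := by positivity
  field_simp
  ring

lemma abs_K_le (τ s ρ : ℝ) (hτ : 0 < τ) (hs : 0 < s) (hρ : 0 < ρ)
    (x y z : EuclideanSpace ℝ (Fin 4)) :
    ‖gaussKernel τ s ρ x y z‖ ≤ M τ s ρ := by
  rw [abs_K τ s ρ hτ hs hρ x y z]
  have hexp : Real.exp (∑ i : Fin 4,
      (gD τ s ρ (x i) (y i) (z i) - (gB τ s ρ (x i) (y i) (z i))^2/(4 * gA τ s ρ)).re) ≤ 1 := by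
    rw [Real.exp_le_one_iff]
    exact Finset.sum_nonpos fun i _ => re_le τ s ρ (x i) (y i) (z i) hτ hs hρ
  calc ((16 * Real.pi ^ 2 * ρ ^ 2 * τ * s)^2)⁻¹ * (Real.pi / ‖gA τ s ρ‖)^2
        * Real.exp _ ≤ ((16 * Real.pi ^ 2 * ρ ^ 2 * τ * s)^2)⁻¹
          * (Real.pi / ‖gA τ s ρ‖)^2 * 1 := by
        apply mul_le_mul_of_nonneg_left hexp
        positivity
    _ = M τ s ρ := by rw [mul_one, prefactor_eq τ s ρ hτ hs hρ]

lemma abs_K_zero (τ s ρ : ℝ) (hτ : 0 < τ) (hs : 0 < s) (hρ : 0 < ρ) :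
    ‖gaussKernel τ s ρ 0 0 0‖ = M τ s ρ := by
  rw [abs_K τ s ρ hτ hs hρ 0 0 0]
  have h0 : ∀ i : Fin 4, (gD τ s ρ ((0 : EuclideanSpace ℝ (Fin 4)) i)
      ((0 : EuclideanSpace ℝ (Fin 4)) i) ((0 : EuclideanSpace ℝ (Fin 4)) i)
      - (gB τ s ρ ((0 : EuclideanSpace ℝ (Fin 4)) i) ((0 : EuclideanSpace ℝ (Fin 4)) i)
        ((0 : EuclideanSpace ℝ (Fin 4)) i))^2/(4 * gA τ s ρ)).re = 0 := by
    intro i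
    have : (0 : EuclideanSpace ℝ (Fin 4)) i = (0:ℝ) := rfl
    rw [this]
    simp [gB, gD]
  simp only [h0]
  simp [prefactor_eq τ s ρ hτ hs hρ]

end GaussAux

/-- Gaussian kernel computation: for `s, τ, ρ > 0`,
`sup_{x,y,z} |K(τ,z;s,y;x)| ∼ [16 s²τ² + ρ⁴(s+τ)²]^{-1}` with absolute constants. -/
theorem gaussian_kernel_bound :
    ∃ c C : ℝ, 0 < c ∧ 0 < C ∧
      ∀ τ s ρ : ℝ, 0 < τ → 0 < s → 0 < ρ →
        (c * (16 * s ^ 2 * τ ^ 2 + ρ ^ 4 * (s + τ) ^ 2)⁻¹ ≤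
            ⨆ x : EuclideanSpace ℝ (Fin 4), ⨆ y : EuclideanSpace ℝ (Fin 4),
              ⨆ z : EuclideanSpace ℝ (Fin 4), ‖gaussKernel τ s ρ x y z‖) ∧
          (⨆ x : EuclideanSpace ℝ (Fin 4), ⨆ y : EuclideanSpace ℝ (Fin 4),
              ⨆ z : EuclideanSpace ℝ (Fin 4), ‖gaussKernel τ s ρ x y z‖) ≤
            C * (16 * s ^ 2 * τ ^ 2 + ρ ^ 4 * (s + τ) ^ 2)⁻¹ := by
  refine ⟨(16 * Real.pi^2)⁻¹, (16 * Real.pi^2)⁻¹, by positivity, by positivity,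
    fun τ s ρ hτ hs hρ => ?_⟩
  set f : EuclideanSpace ℝ (Fin 4) → EuclideanSpace ℝ (Fin 4) → EuclideanSpace ℝ (Fin 4) → ℝ :=
    fun x y z => ‖gaussKernel τ s ρ x y z‖ with hf
  have hMeq : GaussAux.M τ s ρ
      = (16 * Real.pi^2)⁻¹ * (16 * s ^ 2 * τ ^ 2 + ρ ^ 4 * (s + τ) ^ 2)⁻¹ := rfl
  have hle : ∀ x y z, f x y z ≤ GaussAux.M τ s ρ :=
    fun x y z => GaussAux.abs_K_le τ s ρ hτ hs hρ x y z
  have h0 : f 0 0 0 = GaussAux.M τ s ρ := GaussAux.abs_K_zero τ s ρ hτ hs hρ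
  constructor
  · rw [← hMeq, ← h0]
    have bz : BddAbove (Set.range fun z => f 0 0 z) := by
      refine ⟨GaussAux.M τ s ρ, ?_⟩
      rintro _ ⟨z, rfl⟩
      exact hle 0 0 z
    have by' : BddAbove (Set.range fun y => ⨆ z, f 0 y z) := by
      refine ⟨GaussAux.M τ s ρ, ?_⟩
      rintro _ ⟨y, rfl⟩
      exact ciSup_le fun z => hle 0 y z
    have bx : BddAbove (Set.range fun x => ⨆ y, ⨆ z, f x y z) := by
      refine ⟨GaussAux.M τ s ρ, ?_⟩
      rintro _ ⟨x, rfl⟩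
      exact ciSup_le fun y => ciSup_le fun z => hle x y z
    calc f 0 0 0 ≤ ⨆ z, f 0 0 z := le_ciSup bz 0
      _ ≤ ⨆ y, ⨆ z, f 0 y z := le_ciSup by' 0
      _ ≤ ⨆ x, ⨆ y, ⨆ z, f x y z := le_ciSup bx 0
  · rw [← hMeq]
    exact ciSup_le fun x => ciSup_le fun y => ciSup_le fun z => hle x y z
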